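/- Let Ω be a finite set of states with |Ω| = L ≥ 2, let π be a probability mass function on Ω with π(ω) > 0 for every ω, let S be a finite nonempty set, and for each ω ∈ Ω let p_ω : S → ℝ be a probability mass function, with the p_ω pairwise distinct. Consider signals consisting of (L−1)-tuples s = (s₁, …, s_{L−1}) ∈ S^{L−1} drawn i.i.d. from p_ω conditional on ω, and for each s with positive total probability define the posterior vector μ(s) ∈ ℝ^Ω by μ(s)(ω) = π(ω)·∏_k p_ω(s_k) / Σ_{ω'} π(ω')·∏_k p_{ω'}(s_k). Then there exist L tuples s¹, …, s^L ∈ S^{L−1}, each with positive total probability, such that the L posterior vectors μ(s¹), …, μ(s^L) are linearly independent in ℝ^Ω. -/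

import Mathlib

open Polynomial in
/-- There is a linear functional separating finitely many pairwise distinct vectors. -/
lemma exists_separating_functional {Ω S : Type*} [Fintype Ω] [Fintype S]
    (p : Ω → S → ℝ) (hdistinct : Function.Injective p) :
    ∃ f : S → ℝ, Function.Injective (fun ω => ∑ s, f s * p ω s) := by
  classical
  obtain ⟨m, e⟩ : ∃ m, Nonempty (S ≃ Fin m) := ⟨_, ⟨Fintype.equivFin S⟩⟩
  obtain ⟨e⟩ := e
  set P : Ω → Ω → ℝ[X] := fun ω ω' => ∑ s, C (p ω s - p ω' s) * X ^ (e s : ℕ) with hP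
  have hPne : ∀ ω ω', ω ≠ ω' → P ω ω' ≠ 0 := by
    intro ω ω' hne
    obtain ⟨s₀, hs₀⟩ : ∃ s₀, p ω s₀ ≠ p ω' s₀ := by
      by_contra h
      push_neg at h
      exact hne (hdistinct (funext h))
    intro h0
    have : (P ω ω').coeff (e s₀) = p ω s₀ - p ω' s₀ := by
      rw [hP]
      rw [finset_sum_coeff]
      simp only [coeff_C_mul, coeff_X_pow]
      rw [Finset.sum_eq_single s₀]
      · simp
      · intro s _ hs
        have : ((e s₀ : ℕ) = (e s : ℕ)) = False := by
          simp only [eq_iff_iff, iff_false]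
          exact fun h => hs (e.injective (Fin.val_injective h)).symm
        simp [this]
      · simp
    rw [h0] at this
    simp at this
    exact hs₀ (sub_eq_zero.mp this.symm ▸ by linarith)
  set Q : ℝ[X] := ∏ q ∈ Finset.univ.offDiag, P q.1 q.2 with hQ
  have hQne : Q ≠ 0 := by
    rw [hQ, Finset.prod_ne_zero_iff]
    rintro ⟨ω, ω'⟩ hq
    exact hPne ω ω' (Finset.mem_offDiag.mp hq).2.2
  obtain ⟨x, hx⟩ : ∃ x : ℝ, ¬ Q.IsRoot x := by
    have hinf : { x : ℝ | Q.IsRoot x }ᶜ.Infinite :=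
      Set.Finite.infinite_compl (Polynomial.finite_setOf_isRoot hQne)
    obtain ⟨x, hx⟩ := hinf.nonempty
    exact ⟨x, hx⟩
  refine ⟨fun s => x ^ (e s : ℕ), ?_⟩
  intro ω ω' h
  by_contra hne
  have hmem : (ω, ω') ∈ Finset.univ.offDiag := Finset.mem_offDiag.mpr ⟨Finset.mem_univ _, Finset.mem_univ _, hne⟩
  have heval : (P ω ω').eval x ≠ 0 := by
    intro h0
    apply hx
    rw [hQ]
    unfold Polynomial.IsRoot
    rw [eval_prod]
    exact Finset.prod_eq_zero hmem h0
  apply heval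
  have : (P ω ω').eval x = (∑ s, x ^ (e s : ℕ) * p ω s) - ∑ s, x ^ (e s : ℕ) * p ω' s := by
    rw [hP]
    simp only [eval_finset_sum, eval_mul, eval_C, eval_pow, eval_X]
    rw [← Finset.sum_sub_distrib]
    congr 1; ext s; ring
  simp only [] at h
  rw [this, h, sub_self]

lemma prod_if_lt_fin {n m : ℕ} (hm : m ≤ n) (a : ℝ) :
    ∏ k : Fin n, (if (k : ℕ) < m then a else 1) = a ^ m := by
  rw [Fin.prod_univ_eq_prod_range (fun k => if k < m then a else 1) n]
  rw [← Finset.prod_filter]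
  have : (Finset.range n).filter (· < m) = Finset.range m := by
    ext k
    simp only [Finset.mem_filter, Finset.mem_range]
    exact ⟨fun h => h.2, fun h => ⟨lt_of_lt_of_le h hm, h⟩⟩
  rw [this, Finset.prod_const, Finset.card_range]

/-- Claim 1 of the paper: in a finite-state Bayesian model with prior `π` on a state
space of cardinality `L ≥ 2` and conditionally i.i.d. signals with pairwise distinct
state-dependent distributions `p ω`, after observing `L − 1` i.i.d. draws there exist
`L` signal tuples, each with positive total probability, whose posterior vectors are
linearly independent in `ℝ^Ω`. -/
theorem posteriors_full_rank
    {Ω : Type*} [Fintype Ω] {L : ℕ} (hL : 2 ≤ L) (hcard : Fintype.card Ω = L)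
    {S : Type*} [Fintype S] [Nonempty S]
    (π : Ω → ℝ) (hπ : ∀ ω, 0 < π ω) (hπsum : ∑ ω, π ω = 1)
    (p : Ω → S → ℝ) (hp : ∀ ω s, 0 ≤ p ω s) (hpsum : ∀ ω, ∑ s, p ω s = 1)
    (hdistinct : Function.Injective p) :
    ∃ t : Fin L → (Fin (L - 1) → S),
      (∀ j, 0 < ∑ ω, π ω * ∏ k, p ω (t j k)) ∧
      LinearIndependent ℝ (fun j : Fin L => fun ω : Ω =>
        π ω * (∏ k, p ω (t j k)) / ∑ ω', π ω' * ∏ k, p ω' (t j k)) := by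
  classical
  set v : (Fin (L - 1) → S) → (Ω → ℝ) := fun s ω => π ω * ∏ k, p ω (s k) with hv
  -- Step 1: the vectors v s span ℝ^Ω
  have hspan : Submodule.span ℝ (Set.range v) = ⊤ := by
    by_contra hne
    obtain ⟨φ, hφne, hφbot⟩ :=
      (Submodule.span ℝ (Set.range v)).exists_dual_map_eq_bot_of_lt_top
        (lt_top_iff_ne_top.mpr hne) inferInstance
    set c : Ω → ℝ := fun ω => φ (fun j => if ω = j then 1 else 0) with hc
    have hrep : ∀ x : Ω → ℝ, φ x = ∑ ω, x ω * c ω := by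
      intro x
      conv_lhs => rw [pi_eq_sum_univ x]
      rw [map_sum]
      exact Finset.sum_congr rfl fun ω _ => by rw [map_smul]; rfl
    have hzero : ∀ s : Fin (L - 1) → S, ∑ ω, (π ω * ∏ k, p ω (s k)) * c ω = 0 := by
      intro s
      have hmem : v s ∈ Submodule.span ℝ (Set.range v) :=
        Submodule.subset_span (Set.mem_range_self s)
      have : φ (v s) ∈ ((Submodule.span ℝ (Set.range v)).map φ : Submodule ℝ ℝ) :=
        Submodule.mem_map_of_mem hmem
      rw [hφbot, Submodule.mem_bot] at this
      rw [← hrep (v s)]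
      exact this
    set c' : Ω → ℝ := fun ω => c ω * π ω with hc'
    have hzero' : ∀ s : Fin (L - 1) → S, ∑ ω, c' ω * ∏ k, p ω (s k) = 0 := by
      intro s
      rw [← hzero s]
      exact Finset.sum_congr rfl fun ω _ => by ring
    -- multilinear expansion
    have hA : ∀ f : Fin (L - 1) → S → ℝ,
        ∑ ω, c' ω * ∏ k, (∑ s, f k s * p ω s) = 0 := by
      intro f
      have expand : ∀ ω, ∏ k, (∑ s, f k s * p ω s)
          = ∑ u : Fin (L - 1) → S, (∏ k, f k (u k)) * ∏ k, p ω (u k) := by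
        intro ω
        rw [Fintype.prod_sum]
        exact Finset.sum_congr rfl fun u _ => by rw [Finset.prod_mul_distrib]
      simp_rw [expand, Finset.mul_sum]
      rw [Finset.sum_comm]
      refine Finset.sum_eq_zero fun u _ => ?_
      simp_rw [mul_left_comm]
      rw [← Finset.mul_sum, hzero' u, mul_zero]
    obtain ⟨f₀, hf₀⟩ := exists_separating_functional p hdistinct
    set r : Ω → ℝ := fun ω => ∑ s, f₀ s * p ω s with hr
    have hpow : ∀ i : Fin L, ∑ ω, c' ω * r ω ^ (i : ℕ) = 0 := by
      intro i
      have hi : (i : ℕ) ≤ L - 1 := Nat.le_sub_one_of_lt i.2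
      have := hA (fun k => if (k : ℕ) < (i : ℕ) then f₀ else fun _ => 1)
      rw [← this]
      refine Finset.sum_congr rfl fun ω _ => ?_
      congr 1
      have : ∀ k : Fin (L - 1),
          (∑ s, (if (k : ℕ) < (i : ℕ) then f₀ else fun _ => (1:ℝ)) s * p ω s)
            = if (k : ℕ) < (i : ℕ) then r ω else 1 := by
        intro k
        by_cases h : (k : ℕ) < (i : ℕ)
        · simp only [h, if_true]; rfl
        · simp only [h, if_false, one_mul, hpsum ω]
      simp_rw [this]
      rw [prod_if_lt_fin hi]
    -- Vandermonde step
    set g : Ω ≃ Fin L := Fintype.equivFinOfCardEq hcard with hg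
    have hinj : Function.Injective (fun j : Fin L => r (g.symm j)) := hf₀.comp g.symm.injective
    have hvz : (fun j : Fin L => c' (g.symm j)) = 0 := by
      apply Matrix.eq_zero_of_forall_pow_sum_mul_pow_eq_zero hinj
      intro i
      rw [← hpow i]
      exact Equiv.sum_comp g.symm (fun ω => c' ω * r ω ^ (i : ℕ))
    have hc0 : ∀ ω, c ω = 0 := by
      intro ω
      have := congrFun hvz (g ω)
      simp only [Equiv.symm_apply_apply, Pi.zero_apply] at this
      have hπne : π ω ≠ 0 := (hπ ω).ne'
      exact (mul_eq_zero.mp this).resolve_right hπne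
    apply hφne
    refine LinearMap.ext fun x => ?_
    rw [hrep x]
    simp [hc0]
  -- Step 2: extract a basis from the spanning family
  obtain ⟨b, hbsub, hbspan, hbind⟩ := exists_linearIndependent ℝ (Set.range v)
  have hbfin : b.Finite := hbind.setFinite
  haveI : Fintype b := hbfin.fintype
  have hbtop : ⊤ ≤ Submodule.span ℝ (Set.range ((↑) : b → (Ω → ℝ))) := by
    rw [Subtype.range_coe, hbspan, hspan]
  let B : Module.Basis b ℝ (Ω → ℝ) := Module.Basis.mk hbind hbtop
  have hcardb : Fintype.card b = L := by
    have h1 : Module.finrank ℝ (Ω → ℝ) = Fintype.card b :=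
      Module.finrank_eq_card_basis B
    rw [Module.finrank_pi, hcard] at h1
    exact h1.symm
  let e : Fin L ≃ b := (Fintype.equivFinOfCardEq hcardb).symm
  have hch : ∀ j : Fin L, ∃ s, v s = ((e j : (Ω → ℝ))) := fun j => hbsub (e j).2
  set t : Fin L → (Fin (L - 1) → S) := fun j => (hch j).choose with ht
  have hvt : ∀ j, v (t j) = ((e j : (Ω → ℝ))) := fun j => (hch j).choose_spec
  have hindv : LinearIndependent ℝ (fun j : Fin L => v (t j)) := by
    rw [funext hvt]
    exact hbind.comp e e.injective
  have hZ : ∀ j, 0 < ∑ ω, π ω * ∏ k, p ω (t j k) := by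
    intro j
    have hne0 : v (t j) ≠ 0 := hindv.ne_zero j
    obtain ⟨ω₀, hω₀⟩ := Function.ne_iff.mp hne0
    have hnn : ∀ ω, 0 ≤ π ω * ∏ k, p ω (t j k) := fun ω =>
      mul_nonneg (hπ ω).le (Finset.prod_nonneg fun k _ => hp ω (t j k))
    refine Finset.sum_pos' (fun ω _ => hnn ω) ⟨ω₀, Finset.mem_univ _, ?_⟩
    exact lt_of_le_of_ne (hnn ω₀) (Ne.symm hω₀)
  refine ⟨t, hZ, ?_⟩
  have hu : ∀ j, (∑ ω, π ω * ∏ k, p ω (t j k))⁻¹ ≠ 0 := fun j => inv_ne_zero (hZ j).ne'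
  let w : Fin L → ℝˣ := fun j => Units.mk0 _ (hu j)
  have := hindv.units_smul w
  convert this using 1
  funext j
  funext ω
  show π ω * (∏ k, p ω (t j k)) / (∑ ω', π ω' * ∏ k, p ω' (t j k)) = (w j • v (t j)) ω
  simp only [Pi.smul_apply', Units.smul_def, Units.smul_mk0, w, hv]
  rw [div_eq_inv_mul]
  rfl
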